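/- arXiv:0810.2650 — 11 statements merged into one kernel-verified Lean document; each statement's English description precedes it below -/
import Mathlib

section
/- For all integers m, n, t with m ≤ -1, n ≤ -1, t ≤ -1, and not all of m, n, t equal to -1, the set of triples (a, b, c) of nonzero real numbers satisfying 1 + a + 1/b = m, 1 + b + 1/c = n, 1 + c + 1/a = t has exactly two elements. -/
lemma Q_aux (M N T : ℝ) (hM : M ≤ -2) (hN : N ≤ -2) (hT : T ≤ -2)
    (hneg : (N*T-1) - (M+T-N-N*M*T) + (N*M-1) < 0) :
    {p : ℝ × ℝ × ℝ | p.1 ≠ 0 ∧ p.2.1 ≠ 0 ∧ p.2.2 ≠ 0 ∧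
      1 + p.1 + 1 / p.2.1 = M + 1 ∧
      1 + p.2.1 + 1 / p.2.2 = N + 1 ∧
      1 + p.2.2 + 1 / p.1 = T + 1}.ncard = 2 := by
  set A : ℝ := N*T - 1 with hAdef
  set B : ℝ := M + T - N - N*M*T with hBdef
  set C : ℝ := N*M - 1 with hCdef
  have hApos : 0 < A := by rw [hAdef]; nlinarith
  have hCpos : 0 < C := by rw [hCdef]; nlinarith
  have hMT : 0 < M*T - 1 := by nlinarith
  have hDpos : 0 < discrim A B C := by
    rw [discrim]
    nlinarith [sq_nonneg (2*A - B), mul_pos hApos (by linarith : (0:ℝ) < -(A - B + C))]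
  set s : ℝ := Real.sqrt (discrim A B C) with hsdef
  have hs : discrim A B C = s * s := (Real.mul_self_sqrt hDpos.le).symm
  have hspos : 0 < s := Real.sqrt_pos.mpr hDpos
  set r₁ : ℝ := (-B + s)/(2*A) with hr1def
  set r₂ : ℝ := (-B - s)/(2*A) with hr2def
  have hroot : ∀ x : ℝ, A * (x*x) + B * x + C = 0 ↔ x = r₁ ∨ x = r₂ := fun x =>
    quadratic_eq_zero_iff hApos.ne' hs x
  -- facts about any root
  have hfacts : ∀ x : ℝ, A * (x*x) + B * x + C = 0 →
      x ≠ 0 ∧ M - x ≠ 0 ∧ T*x - 1 ≠ 0 := by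
    intro x hx
    have hx0 : x ≠ 0 := by
      rintro rfl
      simp at hx
      nlinarith
    have hMx : M - x ≠ 0 := by
      intro h
      have hxM : x = M := by linarith
      subst hxM
      rw [hAdef, hBdef, hCdef] at hx
      nlinarith
    refine ⟨hx0, hMx, ?_⟩
    intro h
    have h0 : x * (M - x) = 0 := by
      rw [hAdef, hBdef, hCdef] at hx
      linear_combination hx - (N*x + 1 - N*M) * h
    rcases mul_eq_zero.mp h0 with h' | h'
    · exact hx0 h'
    · exact hMx h'
  have hr1 : A * (r₁*r₁) + B * r₁ + C = 0 := (hroot r₁).mpr (Or.inl rfl)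
  have hr2 : A * (r₂*r₂) + B * r₂ + C = 0 := (hroot r₂).mpr (Or.inr rfl)
  have hrne : r₁ ≠ r₂ := by
    rw [hr1def, hr2def]
    intro h
    rw [div_eq_div_iff (by positivity) (by positivity)] at h
    nlinarith
  have hset : {p : ℝ × ℝ × ℝ | p.1 ≠ 0 ∧ p.2.1 ≠ 0 ∧ p.2.2 ≠ 0 ∧
      1 + p.1 + 1 / p.2.1 = M + 1 ∧
      1 + p.2.1 + 1 / p.2.2 = N + 1 ∧
      1 + p.2.2 + 1 / p.1 = T + 1} =
      {(r₁, 1/(M - r₁), T - 1/r₁), (r₂, 1/(M - r₂), T - 1/r₂)} := by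
    ext ⟨a, b, c⟩
    simp only [Set.mem_setOf_eq, Set.mem_insert_iff, Set.mem_singleton_iff, Prod.mk.injEq]
    constructor
    · rintro ⟨ha, hb, hc, e1, e2, e3⟩
      have h1b : 1/b = M - a := by linarith
      rw [div_eq_iff hb] at h1b
      have h1 : b * (M - a) = 1 := by linear_combination -h1b
      have hMa : M - a ≠ 0 := by
        intro h; rw [h, mul_zero] at h1; exact one_ne_zero h1.symm
      have hbval : b = 1/(M - a) := eq_one_div_of_mul_eq_one_left h1
      have hcval : c = T - 1/a := by
        have h3b : 1/a = T - c := by linarith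
        rw [h3b]; ring
      have h3 : c * a = T*a - 1 := by
        rw [hcval]; field_simp
      have h2b : 1/c = N - b := by linarith
      rw [div_eq_iff hc] at h2b
      have h2 : b*c + 1 = N*c := by linear_combination h2b
      have hq : A * (a*a) + B * a + C = 0 := by
        rw [hAdef, hBdef, hCdef]
        linear_combination (-(c*a)) * h1 + (a*(M-a)) * h2 + (N*(M-a)-1) * h3
      rcases (hroot a).mp hq with h | h
      · exact Or.inl ⟨h, by rw [hbval, h], by rw [hcval, h]⟩
      · exact Or.inr ⟨h, by rw [hbval, h], by rw [hcval, h]⟩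
    · intro h
      have key : ∀ x : ℝ, A * (x*x) + B * x + C = 0 →
          (x ≠ 0 ∧ 1/(M-x) ≠ 0 ∧ T - 1/x ≠ 0 ∧
           1 + x + 1/(1/(M-x)) = M + 1 ∧
           1 + 1/(M-x) + 1/(T - 1/x) = N + 1 ∧
           1 + (T - 1/x) + 1/x = T + 1) := by
        intro x hx
        obtain ⟨hx0, hMx, hTx⟩ := hfacts x hx
        have hcx : T - 1/x ≠ 0 := by
          intro h'
          apply hTx
          field_simp at h'
          linear_combination h'
        refine ⟨hx0, one_div_ne_zero hMx, hcx, ?_, ?_, ?_⟩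
        · rw [one_div_one_div]; ring
        · rw [hAdef, hBdef, hCdef] at hx
          have hTx' : x * T - 1 ≠ 0 := by rwa [mul_comm x T]
          field_simp
          ring_nf
          ring_nf at hx
          linear_combination hx
        · ring
      rcases h with ⟨h1, h2, h3⟩ | ⟨h1, h2, h3⟩
      · obtain ⟨p1, p2, p3, p4, p5, p6⟩ := key r₁ hr1
        subst h1; rw [h2, h3]; exact ⟨p1, p2, p3, p4, p5, p6⟩
      · obtain ⟨p1, p2, p3, p4, p5, p6⟩ := key r₂ hr2
        subst h1; rw [h2, h3]; exact ⟨p1, p2, p3, p4, p5, p6⟩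
  rw [hset]
  refine Set.ncard_pair ?_
  intro h
  exact hrne (congrArg Prod.fst h)

lemma Q_uvq (u v q : ℝ) (hu : 1 ≤ u) (hv : 1 ≤ v) (hq : 2 ≤ q)
    (hc : 2 ≤ u ∨ 3 ≤ q ∨ 2 ≤ v) : u + v - q*u*v < 0 := by
  have h1 : (0:ℝ) ≤ u := by linarith
  have h2 : (0:ℝ) ≤ v := by linarith
  rcases hc with h | h | h
  · nlinarith [mul_nonneg (by linarith : (0:ℝ) ≤ q-2) (mul_nonneg h1 h2),
      mul_nonneg h1 (by linarith : (0:ℝ) ≤ v-1),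
      mul_le_mul hv (by linarith : (1:ℝ) ≤ u - 1) (by norm_num) h2]
  · nlinarith [mul_nonneg (by linarith : (0:ℝ) ≤ q-3) (mul_nonneg h1 h2),
      mul_nonneg h1 (by linarith : (0:ℝ) ≤ v-1),
      mul_nonneg h2 (by linarith : (0:ℝ) ≤ u-1),
      mul_le_mul hu hv (by norm_num) (by linarith)]
  · nlinarith [mul_nonneg (by linarith : (0:ℝ) ≤ q-2) (mul_nonneg h1 h2),
      mul_nonneg h2 (by linarith : (0:ℝ) ≤ u-1),
      mul_le_mul hu (by linarith : (1:ℝ) ≤ v - 1) (by norm_num) h1]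



/-- For all integers m, n, t with m ≤ -1, n ≤ -1, t ≤ -1, not all equal
to -1, the set of triples (a, b, c) of nonzero real numbers satisfying the Q(m,n,t)
system has exactly two elements. -/
theorem Q_system_has_exactly_two_solutions
    (m n t : ℤ) (hm : m ≤ -1) (hn : n ≤ -1) (ht : t ≤ -1)
    (hnot : ¬(m = -1 ∧ n = -1 ∧ t = -1)) :
    {p : ℝ × ℝ × ℝ | p.1 ≠ 0 ∧ p.2.1 ≠ 0 ∧ p.2.2 ≠ 0 ∧
      1 + p.1 + 1 / p.2.1 = (m : ℝ) ∧
      1 + p.2.1 + 1 / p.2.2 = (n : ℝ) ∧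
      1 + p.2.2 + 1 / p.1 = (t : ℝ)}.ncard = 2 := by
  have hm' : (m:ℝ) ≤ -1 := by exact_mod_cast hm
  have hn' : (n:ℝ) ≤ -1 := by exact_mod_cast hn
  have ht' : (t:ℝ) ≤ -1 := by exact_mod_cast ht
  have hdisj : m ≤ -2 ∨ n ≤ -2 ∨ t ≤ -2 := by omega
  have hneg : (((n:ℝ)-1)*((t:ℝ)-1)-1) -
      (((m:ℝ)-1)+((t:ℝ)-1)-((n:ℝ)-1)-((n:ℝ)-1)*((m:ℝ)-1)*((t:ℝ)-1)) +
      (((n:ℝ)-1)*((m:ℝ)-1)-1) < 0 := by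
    have key : (((n:ℝ)-1)*((t:ℝ)-1)-1) -
        (((m:ℝ)-1)+((t:ℝ)-1)-((n:ℝ)-1)-((n:ℝ)-1)*((m:ℝ)-1)*((t:ℝ)-1)) +
        (((n:ℝ)-1)*((m:ℝ)-1)-1) =
        (-(m:ℝ)) + (-(t:ℝ)) - (1-(n:ℝ)) * (-(m:ℝ)) * (-(t:ℝ)) := by ring
    rw [key]
    apply Q_uvq _ _ _ (by linarith) (by linarith) (by linarith)
    rcases hdisj with h | h | h
    · refine Or.inl ?_
      have hh : (m:ℝ) ≤ -2 := by exact_mod_cast h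
      linarith
    · refine Or.inr (Or.inl ?_)
      have hh : (n:ℝ) ≤ -2 := by exact_mod_cast h
      linarith
    · refine Or.inr (Or.inr ?_)
      have hh : (t:ℝ) ≤ -2 := by exact_mod_cast h
      linarith
  have := Q_aux ((m:ℝ)-1) ((n:ℝ)-1) ((t:ℝ)-1) (by linarith) (by linarith) (by linarith) hneg
  simpa using this
end

section
/- For all integers m, n, t with m ≤ -1, n ≤ -1, t ≤ -1, and not all of m, n, t equal to -1, there exist nonzero real numbers a₁, b₁, c₁ solving the system 1 + a + 1/b = m, 1 + b + 1/c = n, 1 + c + 1/a = t with -1 < a₁ < 0, -1 < b₁ < 0, -1 < c₁ < 0, and there exist nonzero real numbers a₂, b₂, c₂ solving the same system with a₂ < -1, b₂ < -1, c₂ < -1. -/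
/-- For negative reals, inversion is antitone (strict). -/
private lemma Qsys_inv_lt_inv {x y : ℝ} (hy : y < 0) (h : x < y) : y⁻¹ < x⁻¹ := by
  have hx : x < 0 := h.trans hy
  have hxi : x⁻¹ < 0 := inv_neg''.mpr hx
  have hyi : y⁻¹ < 0 := inv_neg''.mpr hy
  have key : x⁻¹ - y⁻¹ = (y - x) * (x⁻¹ * y⁻¹) := by
    linear_combination y⁻¹ * mul_inv_cancel₀ hx.ne - x⁻¹ * mul_inv_cancel₀ hy.ne
  have hpos : 0 < (y - x) * (x⁻¹ * y⁻¹) :=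
    mul_pos (sub_pos.mpr h) (mul_pos_of_neg_of_neg hxi hyi)
  linarith [key ▸ hpos]

/-- For negative reals, inversion is antitone. -/
private lemma Qsys_inv_le_inv {x y : ℝ} (hy : y < 0) (h : x ≤ y) : y⁻¹ ≤ x⁻¹ := by
  rcases eq_or_lt_of_le h with rfl | h
  · exact le_refl _
  · exact (Qsys_inv_lt_inv hy h).le

/-- IVT for the function F(x) = (T - (N - x)⁻¹)⁻¹ - M + x⁻¹, increasing sign. -/
private lemma Qsys_root (M N T l r : ℝ) (hlr : l ≤ r)
    (h0 : ∀ x ∈ Set.Icc l r, x ≠ 0)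
    (h1 : ∀ x ∈ Set.Icc l r, N - x ≠ 0)
    (h2 : ∀ x ∈ Set.Icc l r, T - (N - x)⁻¹ ≠ 0)
    (hl : (T - (N - l)⁻¹)⁻¹ - M + l⁻¹ < 0)
    (hr : 0 < (T - (N - r)⁻¹)⁻¹ - M + r⁻¹) :
    ∃ b, l < b ∧ b < r ∧ (T - (N - b)⁻¹)⁻¹ - M + b⁻¹ = 0 := by
  have hcont : ContinuousOn (fun x : ℝ => (T - (N - x)⁻¹)⁻¹ - M + x⁻¹) (Set.Icc l r) := by
    apply ContinuousOn.add
    · apply ContinuousOn.sub _ continuousOn_const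
      exact ((continuousOn_const.sub
        ((continuousOn_const.sub continuousOn_id).inv₀ h1)).inv₀ h2)
    · exact continuousOn_id.inv₀ h0
  obtain ⟨b, hb, hfb⟩ := intermediate_value_Ioo hlr hcont (Set.mem_Ioo.mpr ⟨hl, hr⟩)
  exact ⟨b, hb.1, hb.2, hfb⟩

/-- IVT for the function F(x) = (T - (N - x)⁻¹)⁻¹ - M + x⁻¹, decreasing sign. -/
private lemma Qsys_root' (M N T l r : ℝ) (hlr : l ≤ r)
    (h0 : ∀ x ∈ Set.Icc l r, x ≠ 0)
    (h1 : ∀ x ∈ Set.Icc l r, N - x ≠ 0)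
    (h2 : ∀ x ∈ Set.Icc l r, T - (N - x)⁻¹ ≠ 0)
    (hl : 0 < (T - (N - l)⁻¹)⁻¹ - M + l⁻¹)
    (hr : (T - (N - r)⁻¹)⁻¹ - M + r⁻¹ < 0) :
    ∃ b, l < b ∧ b < r ∧ (T - (N - b)⁻¹)⁻¹ - M + b⁻¹ = 0 := by
  have hcont : ContinuousOn (fun x : ℝ => (T - (N - x)⁻¹)⁻¹ - M + x⁻¹) (Set.Icc l r) := by
    apply ContinuousOn.add
    · apply ContinuousOn.sub _ continuousOn_const
      exact ((continuousOn_const.sub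
        ((continuousOn_const.sub continuousOn_id).inv₀ h1)).inv₀ h2)
    · exact continuousOn_id.inv₀ h0
  obtain ⟨b, hb, hfb⟩ := intermediate_value_Ioo' hlr hcont (Set.mem_Ioo.mpr ⟨hr, hl⟩)
  exact ⟨b, hb.1, hb.2, hfb⟩

/-- For all integers m, n, t ≤ -1, not all -1, the Q(m,n,t) system has a
solution with all coordinates in (-1,0) and a solution with all coordinates < -1. -/
theorem Q_system_two_kinds_of_solutions
    (m n t : ℤ) (hm : m ≤ -1) (hn : n ≤ -1) (ht : t ≤ -1)
    (hnot : ¬(m = -1 ∧ n = -1 ∧ t = -1)) :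
    (∃ a b c : ℝ, a ≠ 0 ∧ b ≠ 0 ∧ c ≠ 0 ∧
      1 + a + 1 / b = (m : ℝ) ∧ 1 + b + 1 / c = (n : ℝ) ∧ 1 + c + 1 / a = (t : ℝ) ∧
      -1 < a ∧ a < 0 ∧ -1 < b ∧ b < 0 ∧ -1 < c ∧ c < 0) ∧
    (∃ a b c : ℝ, a ≠ 0 ∧ b ≠ 0 ∧ c ≠ 0 ∧
      1 + a + 1 / b = (m : ℝ) ∧ 1 + b + 1 / c = (n : ℝ) ∧ 1 + c + 1 / a = (t : ℝ) ∧
      a < -1 ∧ b < -1 ∧ c < -1) := by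
  have hm' : (m : ℝ) ≤ -1 := by exact_mod_cast hm
  have hn' : (n : ℝ) ≤ -1 := by exact_mod_cast hn
  have ht' : (t : ℝ) ≤ -1 := by exact_mod_cast ht
  obtain ⟨M, hMdef⟩ : ∃ M : ℝ, M = (m : ℝ) - 1 := ⟨_, rfl⟩
  obtain ⟨N, hNdef⟩ : ∃ N : ℝ, N = (n : ℝ) - 1 := ⟨_, rfl⟩
  obtain ⟨T, hTdef⟩ : ∃ T : ℝ, T = (t : ℝ) - 1 := ⟨_, rfl⟩
  have hM : M ≤ -2 := by rw [hMdef]; linarith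
  have hN : N ≤ -2 := by rw [hNdef]; linarith
  have hT : T ≤ -2 := by rw [hTdef]; linarith
  have hcase : M ≤ -3 ∨ N ≤ -3 ∨ T ≤ -3 := by
    have h2 : m ≤ -2 ∨ n ≤ -2 ∨ t ≤ -2 := by omega
    rcases h2 with h | h | h
    · left; have : (m:ℝ) ≤ -2 := by exact_mod_cast h
      rw [hMdef]; linarith
    · right; left; have : (n:ℝ) ≤ -2 := by exact_mod_cast h
      rw [hNdef]; linarith
    · right; right; have : (t:ℝ) ≤ -2 := by exact_mod_cast h
      rw [hTdef]; linarith
  constructor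
  · -- solution with all coordinates in (-1, 0)
    obtain ⟨r, hrdef⟩ : ∃ r : ℝ, r = (M - 1)⁻¹ := ⟨_, rfl⟩
    have hM1 : M - 1 < 0 := by linarith
    have hrneg : r < 0 := by rw [hrdef]; exact inv_neg''.mpr hM1
    have hrge : (-1 : ℝ) ≤ r := by
      have h := Qsys_inv_le_inv (x := M - 1) (y := -1) (by norm_num) (by linarith)
      norm_num at h
      rw [hrdef]; linarith
    have h0 : ∀ x ∈ Set.Icc (-1 : ℝ) r, x ≠ 0 := fun x hx =>
      ne_of_lt (lt_of_le_of_lt hx.2 hrneg)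
    have hNx : ∀ x ∈ Set.Icc (-1 : ℝ) r, N - x ≤ -1 := fun x hx => by
      have := hx.1; linarith
    have h1 : ∀ x ∈ Set.Icc (-1 : ℝ) r, N - x ≠ 0 := fun x hx =>
      ne_of_lt (by linarith [hNx x hx])
    have hinvNx : ∀ x ∈ Set.Icc (-1 : ℝ) r, -1 ≤ (N - x)⁻¹ ∧ (N - x)⁻¹ < 0 := fun x hx => by
      have h := hNx x hx
      constructor
      · have h2 := Qsys_inv_le_inv (x := N - x) (y := -1) (by norm_num) h
        norm_num at h2; linarith
      · exact inv_neg''.mpr (by linarith)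
    have h2 : ∀ x ∈ Set.Icc (-1 : ℝ) r, T - (N - x)⁻¹ ≠ 0 := fun x hx =>
      ne_of_lt (by have := (hinvNx x hx).1; linarith)
    have hTx : ∀ x ∈ Set.Icc (-1 : ℝ) r,
        -1 ≤ (T - (N - x)⁻¹)⁻¹ ∧ (T - (N - x)⁻¹)⁻¹ < 0 := fun x hx => by
      have h := (hinvNx x hx).1
      have hle : T - (N - x)⁻¹ ≤ -1 := by linarith
      constructor
      · have h2 := Qsys_inv_le_inv (x := T - (N - x)⁻¹) (y := -1) (by norm_num) hle
        norm_num at h2; linarith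
      · exact inv_neg''.mpr (by linarith)
    have hFl : 0 < (T - (N - (-1 : ℝ))⁻¹)⁻¹ - M + (-1 : ℝ)⁻¹ := by
      rw [show ((-1 : ℝ))⁻¹ = -1 by norm_num, show N - (-1 : ℝ) = N + 1 by ring]
      have hN1 : N + 1 ≤ -1 := by linarith
      have hu1 : -1 ≤ (N + 1)⁻¹ := by
        have h3 := Qsys_inv_le_inv (x := N + 1) (y := -1) (by norm_num) hN1
        norm_num at h3; linarith
      have hu0 : (N + 1)⁻¹ < 0 := inv_neg''.mpr (by linarith)
      rcases hcase with h | h | h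
      · have hvle : T - (N + 1)⁻¹ ≤ -1 := by linarith
        have h3 := Qsys_inv_le_inv (x := T - (N + 1)⁻¹) (y := -1) (by norm_num) hvle
        norm_num at h3; linarith
      · have hu : -(1/2 : ℝ) ≤ (N + 1)⁻¹ := by
          have h3 := Qsys_inv_le_inv (x := N + 1) (y := -2) (by norm_num) (by linarith)
          norm_num at h3; linarith
        have hvle : T - (N + 1)⁻¹ ≤ -(3/2) := by linarith
        have h3 := Qsys_inv_le_inv (x := T - (N + 1)⁻¹) (y := -(3/2)) (by norm_num) hvle
        norm_num at h3; linarith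
      · have hvle : T - (N + 1)⁻¹ ≤ -2 := by linarith
        have h3 := Qsys_inv_le_inv (x := T - (N + 1)⁻¹) (y := -2) (by norm_num) hvle
        norm_num at h3; linarith
    have hmemr : r ∈ Set.Icc (-1 : ℝ) r := ⟨hrge, le_refl _⟩
    have hrinv : r⁻¹ = M - 1 := by rw [hrdef, inv_inv]
    have hFr : (T - (N - r)⁻¹)⁻¹ - M + r⁻¹ < 0 := by
      have hv := (hTx r hmemr).2
      rw [hrinv]; linarith
    obtain ⟨b, hb1, hb2, hroot⟩ := Qsys_root' M N T (-1) r hrge h0 h1 h2 hFl hFr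
    have hbneg : b < 0 := hb2.trans hrneg
    obtain ⟨c, hcdef⟩ : ∃ c : ℝ, c = (N - b)⁻¹ := ⟨_, rfl⟩
    obtain ⟨a, hadef⟩ : ∃ a : ℝ, a = (T - c)⁻¹ := ⟨_, rfl⟩
    have hNb : N - b < -1 := by linarith
    have hc1 : -1 < c := by
      have h3 := Qsys_inv_lt_inv (x := N - b) (y := -1) (by norm_num) hNb
      rw [← hcdef] at h3
      norm_num at h3; linarith
    have hc0 : c < 0 := by
      have h3 : (N - b)⁻¹ < 0 := inv_neg''.mpr (by linarith)
      rw [← hcdef] at h3; exact h3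
    have hTc : T - c < -1 := by linarith
    have ha1 : -1 < a := by
      have h3 := Qsys_inv_lt_inv (x := T - c) (y := -1) (by norm_num) hTc
      rw [← hadef] at h3
      norm_num at h3; linarith
    have ha0 : a < 0 := by
      have h3 : (T - c)⁻¹ < 0 := inv_neg''.mpr (by linarith)
      rw [← hadef] at h3; exact h3
    refine ⟨a, b, c, ne_of_lt ha0, ne_of_lt hbneg, ne_of_lt hc0, ?_, ?_, ?_,
      ha1, ha0, hb1, hbneg, hc1, hc0⟩
    · rw [one_div, hadef, hcdef]
      have hmM : (m : ℝ) = M + 1 := by rw [hMdef]; ring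
      linarith [hroot]
    · rw [one_div, hcdef, inv_inv]
      have hnN : (n : ℝ) = N + 1 := by rw [hNdef]; ring
      linarith
    · rw [one_div, hadef, inv_inv]
      have htT : (t : ℝ) = T + 1 := by rw [hTdef]; ring
      linarith
  · -- solution with all coordinates < -1
    obtain ⟨e, hedef⟩ : ∃ e : ℝ, e = (-(2 * M))⁻¹ := ⟨_, rfl⟩
    have h2M : (0 : ℝ) < -(2 * M) := by linarith
    have he0 : 0 < e := by rw [hedef]; exact inv_pos.mpr h2M
    have he4 : e ≤ 1/4 := by
      have h4 : (4 : ℝ) ≤ -(2 * M) := by linarith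
      have hcancel := mul_inv_cancel₀ h2M.ne'
      rw [hedef]
      nlinarith [mul_nonneg (by linarith : (0:ℝ) ≤ -(2*M) - 4) (inv_pos.mpr h2M).le]
    have heinv : e⁻¹ = -(2 * M) := by rw [hedef, inv_inv]
    have hTe0 : T + e < 0 := by linarith
    have hT1 : T + 1 ≤ -1 := by linarith
    obtain ⟨l, hldef⟩ : ∃ l : ℝ, l = N - (T + e)⁻¹ := ⟨_, rfl⟩
    obtain ⟨r, hrdef⟩ : ∃ r : ℝ, r = N - (T + 1)⁻¹ := ⟨_, rfl⟩
    have hie : (T + e)⁻¹ < 0 := inv_neg''.mpr hTe0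
    have hi1a : -1 ≤ (T + 1)⁻¹ := by
      have h3 := Qsys_inv_le_inv (x := T + 1) (y := -1) (by norm_num) hT1
      norm_num at h3; linarith
    have hi10 : (T + 1)⁻¹ < 0 := inv_neg''.mpr (by linarith)
    have hlr : l < r := by
      have h3 := Qsys_inv_lt_inv (x := T + e) (y := T + 1) (by linarith) (by linarith)
      rw [hldef, hrdef]; linarith
    have hr1 : r ≤ -1 := by rw [hrdef]; linarith
    have hl1 : l < -1 := lt_of_lt_of_le hlr hr1
    have h0 : ∀ x ∈ Set.Icc l r, x ≠ 0 := fun x hx =>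
      ne_of_lt (by have := hx.2; linarith)
    have hNx1 : ∀ x ∈ Set.Icc l r, (T + 1)⁻¹ ≤ N - x := fun x hx => by
      have := hx.2; rw [hrdef] at this; linarith
    have hNx2 : ∀ x ∈ Set.Icc l r, N - x ≤ (T + e)⁻¹ := fun x hx => by
      have := hx.1; rw [hldef] at this; linarith
    have h1 : ∀ x ∈ Set.Icc l r, N - x ≠ 0 := fun x hx =>
      ne_of_lt (lt_of_le_of_lt (hNx2 x hx) hie)
    have hcx : ∀ x ∈ Set.Icc l r, T + e ≤ (N - x)⁻¹ ∧ (N - x)⁻¹ ≤ T + 1 := fun x hx => by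
      constructor
      · have h3 := Qsys_inv_le_inv (x := N - x) (y := (T + e)⁻¹) hie (hNx2 x hx)
        rw [inv_inv] at h3; exact h3
      · have hNx0 : N - x < 0 := lt_of_le_of_lt (hNx2 x hx) hie
        have h3 := Qsys_inv_le_inv (x := (T + 1)⁻¹) (y := N - x) hNx0 (hNx1 x hx)
        rw [inv_inv] at h3; exact h3
    have h2 : ∀ x ∈ Set.Icc l r, T - (N - x)⁻¹ ≠ 0 := fun x hx =>
      ne_of_lt (by have := (hcx x hx).1; linarith)
    have hNl : N - l = (T + e)⁻¹ := by rw [hldef]; ring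
    have hFl : (T - (N - l)⁻¹)⁻¹ - M + l⁻¹ < 0 := by
      rw [hNl, inv_inv, show T - (T + e) = -e by ring, inv_neg, heinv]
      have hli : l⁻¹ < 0 := inv_neg''.mpr (by linarith)
      linarith
    have hNr : N - r = (T + 1)⁻¹ := by rw [hrdef]; ring
    have hFr : 0 < (T - (N - r)⁻¹)⁻¹ - M + r⁻¹ := by
      rw [hNr, inv_inv, show T - (T + 1) = (-1 : ℝ) by ring,
        show ((-1 : ℝ))⁻¹ = -1 by norm_num]
      rcases hcase with h | h | h
      · have hrge : -1 ≤ r⁻¹ := by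
          have h3 := Qsys_inv_le_inv (x := r) (y := -1) (by norm_num) hr1
          norm_num at h3; linarith
        linarith
      · have hrle : r ≤ -2 := by rw [hrdef]; linarith
        have h3 := Qsys_inv_le_inv (x := r) (y := -2) (by norm_num) hrle
        norm_num at h3
        linarith
      · have hi : -(1/2 : ℝ) ≤ (T + 1)⁻¹ := by
          have h3 := Qsys_inv_le_inv (x := T + 1) (y := -2) (by norm_num) (by linarith)
          norm_num at h3; linarith
        have hrle : r ≤ -(3/2) := by rw [hrdef]; linarith
        have h3 := Qsys_inv_le_inv (x := r) (y := -(3/2)) (by norm_num) hrle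
        norm_num at h3
        linarith
    obtain ⟨b, hb1, hb2, hroot⟩ := Qsys_root M N T l r hlr.le h0 h1 h2 hFl hFr
    have hbneg : b < -1 := lt_of_lt_of_le hb2 hr1
    obtain ⟨c, hcdef⟩ : ∃ c : ℝ, c = (N - b)⁻¹ := ⟨_, rfl⟩
    obtain ⟨a, hadef⟩ : ∃ a : ℝ, a = (T - c)⁻¹ := ⟨_, rfl⟩
    have hNb2 : N - b < (T + e)⁻¹ := by rw [hldef] at hb1; linarith
    have hNb1 : (T + 1)⁻¹ < N - b := by rw [hrdef] at hb2; linarith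
    have hcg : T + e < c := by
      have h3 := Qsys_inv_lt_inv (x := N - b) (y := (T + e)⁻¹) hie hNb2
      rw [inv_inv, ← hcdef] at h3; exact h3
    have hcl : c < T + 1 := by
      have hNb0 : N - b < 0 := hNb2.trans hie
      have h3 := Qsys_inv_lt_inv (x := (T + 1)⁻¹) (y := N - b) hNb0 hNb1
      rw [inv_inv, ← hcdef] at h3; exact h3
    have hc1 : c < -1 := by linarith
    have hTc1 : -1 < T - c := by linarith
    have hTcneg : T - c < 0 := by linarith
    have ha : a < -1 := by
      have h3 := Qsys_inv_lt_inv (x := (-1 : ℝ)) (y := T - c) hTcneg hTc1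
      rw [← hadef] at h3
      norm_num at h3; exact h3
    refine ⟨a, b, c, ne_of_lt (by linarith), ne_of_lt (by linarith),
      ne_of_lt (by linarith), ?_, ?_, ?_, ha, hbneg, hc1⟩
    · rw [one_div, hadef, hcdef]
      have hmM : (m : ℝ) = M + 1 := by rw [hMdef]; ring
      linarith [hroot]
    · rw [one_div, hcdef, inv_inv]
      have hnN : (n : ℝ) = N + 1 := by rw [hNdef]; ring
      linarith
    · rw [one_div, hadef, inv_inv]
      have htT : (t : ℝ) = T + 1 := by rw [hTdef]; ring
      linarith
end

section
/- For all integers m, n, t with m ≤ -1, n ≤ -1, t ≤ -1, and not all of m, n, t equal to -1, if a, b, c are nonzero real numbers satisfying 1 + a + 1/b = m, 1 + b + 1/c = n, 1 + c + 1/a = t, then each of a, b, c is irrational. -/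
/-- Integer bound: if x,y,z ≥ 2 and not all equal 2 then x*y*z ≥ x+y+z+3. -/
lemma Q_int_bound (x y z : ℤ) (hx : 2 ≤ x) (hy : 2 ≤ y) (hz : 2 ≤ z)
    (h : ¬(x = 2 ∧ y = 2 ∧ z = 2)) : x + y + z + 3 ≤ x * y * z := by
  rcases (by omega : 3 ≤ x ∨ 3 ≤ y ∨ 3 ≤ z) with h3 | h3 | h3 <;>
    nlinarith [mul_pos (by linarith : (0:ℤ) < y) (by linarith : (0:ℤ) < z),
      mul_pos (by linarith : (0:ℤ) < x) (by linarith : (0:ℤ) < z),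
      mul_pos (by linarith : (0:ℤ) < x) (by linarith : (0:ℤ) < y)]

/-- No rational solution to the Q(m,n,t) system. -/
lemma Q_no_rat_solution (m n t : ℤ) (hm : m ≤ -1) (hn : n ≤ -1) (ht : t ≤ -1)
    (hnot : ¬(m = -1 ∧ n = -1 ∧ t = -1))
    (a b c : ℚ) (ha : a ≠ 0) (hb : b ≠ 0) (hc : c ≠ 0)
    (h1 : 1 + a + 1 / b = (m : ℚ)) (h2 : 1 + b + 1 / c = (n : ℚ))
    (h3 : 1 + c + 1 / a = (t : ℚ)) : False := by
  set X : ℚ := (m : ℚ) - 1 with hX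
  set Y : ℚ := (n : ℚ) - 1 with hY
  set Z : ℚ := (t : ℚ) - 1 with hZ
  have e1 : b * (X - a) = 1 := by
    have : 1 / b = X - a := by rw [hX]; linarith
    field_simp at this; linarith
  have e2 : c * (Y - b) = 1 := by
    have : 1 / c = Y - b := by rw [hY]; linarith
    field_simp at this; linarith
  have e3 : a * (Z - c) = 1 := by
    have : 1 / a = Z - c := by rw [hZ]; linarith
    field_simp at this; linarith
  set q : ℚ := a * b * c with hq
  have key : q ^ 2 - (X * Y * Z - X - Y - Z) * q + 1 = 0 := by
    rw [hq]
    linear_combination (a*c - Y*Z*a*c) * e1 + (a*b - Z*a - Z*a*a*b) * e2 +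
      (-1 - a*b - a*b*b*c) * e3
  -- N as an integer
  set N : ℤ := (m - 1) * (n - 1) * (t - 1) - (m - 1) - (n - 1) - (t - 1) with hN
  have keyN : q ^ 2 - (N : ℚ) * q + 1 = 0 := by
    rw [hX, hY, hZ] at key; rw [hN]; push_cast; linear_combination key
  -- N ≤ -3
  have hNle : N ≤ -3 := by
    have hb3 := Q_int_bound (1 - m) (1 - n) (1 - t) (by omega) (by omega) (by omega)
      (by omega)
    have hpr : (m - 1) * (n - 1) * (t - 1) = -((1 - m) * (1 - n) * (1 - t)) := by ring
    omega
  -- q is an integer: denominator is 1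
  have hq0 : q ≠ 0 := by
    simp [hq, mul_ne_zero, ha, hb, hc]
  have hnum : q.num ^ 2 = N * q.num * (q.den : ℤ) - (q.den : ℤ) ^ 2 := by
    have hqd : (q.den : ℚ) ≠ 0 := by exact_mod_cast q.den_ne_zero
    have hrep : (q.num : ℚ) = q * (q.den : ℚ) := by
      have h0 := Rat.num_div_den q
      rw [div_eq_iff hqd] at h0
      exact h0
    have : ((q.num ^ 2 : ℤ) : ℚ) = ((N * q.num * (q.den : ℤ) - (q.den : ℤ) ^ 2 : ℤ) : ℚ) := by
      push_cast
      rw [hrep]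
      linear_combination ((q.den : ℚ))^2 * keyN
    exact_mod_cast this
  have hdvd : (q.den : ℤ) ∣ q.num ^ 2 := ⟨N * q.num - (q.den : ℤ), by linarith [hnum]⟩
  have hden1 : q.den = 1 := by
    have hcop : Nat.Coprime (q.num.natAbs ^ 2) q.den := (q.reduced).pow_left 2
    have hdvd' : q.den ∣ q.num.natAbs ^ 2 := by
      have := Int.natAbs_dvd_natAbs.mpr hdvd
      simpa [Int.natAbs_pow] using this
    exact Nat.Coprime.eq_one_of_dvd hcop.symm hdvd'
  -- q.num satisfies the integer equation
  have hnum' : q.num ^ 2 = N * q.num - 1 := by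
    rw [hden1] at hnum; push_cast at hnum; linarith
  have hmul : q.num * (N - q.num) = 1 := by linear_combination -hnum'
  rcases Int.eq_one_or_neg_one_of_mul_eq_one hmul with h | h <;>
    · rw [h] at hnum'; omega

/-- If `a` is rational, the whole real solution is rational: contradiction. -/
lemma Q_first_not_rat (m n t : ℤ) (hm : m ≤ -1) (hn : n ≤ -1) (ht : t ≤ -1)
    (hnot : ¬(m = -1 ∧ n = -1 ∧ t = -1))
    (a b c : ℝ) (ha : a ≠ 0) (hb : b ≠ 0) (hc : c ≠ 0)
    (h1 : 1 + a + 1 / b = (m : ℝ)) (h2 : 1 + b + 1 / c = (n : ℝ))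
    (h3 : 1 + c + 1 / a = (t : ℝ)) (qa : ℚ) (hqa : (qa : ℝ) = a) : False := by
  have hib : 1 / b = (m : ℝ) - 1 - a := by linarith
  have hb' : b = ((m : ℝ) - 1 - a)⁻¹ := by rw [← hib, one_div, inv_inv]
  set qb : ℚ := ((m : ℚ) - 1 - qa)⁻¹ with hqbdef
  have hqb : (qb : ℝ) = b := by rw [hb', hqbdef]; push_cast [hqa]; ring
  have hic : 1 / c = (n : ℝ) - 1 - b := by linarith
  have hc' : c = ((n : ℝ) - 1 - b)⁻¹ := by rw [← hic, one_div, inv_inv]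
  set qc : ℚ := ((n : ℚ) - 1 - qb)⁻¹ with hqcdef
  have hqc : (qc : ℝ) = c := by rw [hc', hqcdef]; push_cast [hqb]; ring
  have hqa0 : qa ≠ 0 := fun h => ha (by rw [← hqa, h]; simp)
  have hqb0 : qb ≠ 0 := fun h => hb (by rw [← hqb, h]; simp)
  have hqc0 : qc ≠ 0 := fun h => hc (by rw [← hqc, h]; simp)
  refine Q_no_rat_solution m n t hm hn ht hnot qa qb qc hqa0 hqb0 hqc0 ?_ ?_ ?_
  · have : ((1 + qa + 1 / qb : ℚ) : ℝ) = ((m : ℤ) : ℝ) := by push_cast [hqa, hqb]; exact h1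
    exact_mod_cast this
  · have : ((1 + qb + 1 / qc : ℚ) : ℝ) = ((n : ℤ) : ℝ) := by push_cast [hqb, hqc]; exact h2
    exact_mod_cast this
  · have : ((1 + qc + 1 / qa : ℚ) : ℝ) = ((t : ℤ) : ℝ) := by push_cast [hqc, hqa]; exact h3
    exact_mod_cast this

/-- For integers m, n, t ≤ -1, not all -1, any nonzero real solution
(a, b, c) of the Q(m,n,t) system consists of irrational numbers. -/
theorem Q_system_solutions_irrational
    (m n t : ℤ) (hm : m ≤ -1) (hn : n ≤ -1) (ht : t ≤ -1)
    (hnot : ¬(m = -1 ∧ n = -1 ∧ t = -1))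
    (a b c : ℝ) (ha : a ≠ 0) (hb : b ≠ 0) (hc : c ≠ 0)
    (h1 : 1 + a + 1 / b = (m : ℝ)) (h2 : 1 + b + 1 / c = (n : ℝ))
    (h3 : 1 + c + 1 / a = (t : ℝ)) :
    Irrational a ∧ Irrational b ∧ Irrational c := by
  refine ⟨fun ⟨qa, hqa⟩ => ?_, fun ⟨qb, hqb⟩ => ?_, fun ⟨qc, hqc⟩ => ?_⟩
  · exact Q_first_not_rat m n t hm hn ht hnot a b c ha hb hc h1 h2 h3 qa hqa
  · exact Q_first_not_rat n t m hn ht hm (by tauto) b c a hb hc ha h2 h3 h1 qb hqb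
  · exact Q_first_not_rat t m n ht hm hn (by tauto) c a b hc ha hb h3 h1 h2 qc hqc
end

section
/- Let m, n, t be integers with m ≤ -1, n ≤ -1, t ≤ -1, and let a, b, c be nonzero real numbers satisfying 1 + a + 1/b = m, 1 + b + 1/c = n, 1 + c + 1/a = t. If -1 < a < 0, then -1 < b < 0 and -1 < c < 0; and if a < -1, then b < -1 and c < -1. -/
lemma inv_lt_neg_one {x : ℝ} (hx : x ≠ 0) (h : 1 / x < -1) : -1 < x ∧ x < 0 := by
  have hneg : x < 0 := by
    by_contra h'
    push_neg at h'
    have : 0 < 1 / x := one_div_pos.mpr (lt_of_le_of_ne h' (Ne.symm hx))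
    linarith
  have hmul : (1 / x) * x = 1 := by field_simp
  constructor
  · nlinarith
  · exact hneg

lemma lt_neg_one_inv {x : ℝ} (h : x < -1) : -1 < 1 / x ∧ 1 / x < 0 := by
  have hx : x ≠ 0 := by linarith
  have hmul : (1 / x) * x = 1 := by field_simp
  have h0 : 1 / x < 0 := one_div_neg.mpr (by linarith)
  exact ⟨by nlinarith, h0⟩

/-- For integers m, n, t ≤ -1 and a nonzero real solution (a, b, c) of
the Q(m,n,t) system: if -1 < a < 0 then -1 < b < 0 and -1 < c < 0; and if a < -1
then b < -1 and c < -1. -/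
theorem Q_system_sign_propagation
    (m n t : ℤ) (hm : m ≤ -1) (hn : n ≤ -1) (ht : t ≤ -1)
    (a b c : ℝ) (ha : a ≠ 0) (hb : b ≠ 0) (hc : c ≠ 0)
    (h1 : 1 + a + 1 / b = (m : ℝ)) (h2 : 1 + b + 1 / c = (n : ℝ))
    (h3 : 1 + c + 1 / a = (t : ℝ)) :
    ((-1 < a ∧ a < 0) → ((-1 < b ∧ b < 0) ∧ (-1 < c ∧ c < 0))) ∧
    (a < -1 → (b < -1 ∧ c < -1)) := by
  have hm' : (m : ℝ) ≤ -1 := by exact_mod_cast hm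
  have hn' : (n : ℝ) ≤ -1 := by exact_mod_cast hn
  have ht' : (t : ℝ) ≤ -1 := by exact_mod_cast ht
  constructor
  · rintro ⟨ha1, ha2⟩
    have hbB : -1 < b ∧ b < 0 := inv_lt_neg_one hb (by linarith)
    have hcB : -1 < c ∧ c < 0 := inv_lt_neg_one hc (by linarith [hbB.1, hbB.2])
    exact ⟨hbB, hcB⟩
  · intro haL
    have hinva := lt_neg_one_inv haL
    have hcL : c < -1 := by linarith [hinva.1, hinva.2]
    have hinvc := lt_neg_one_inv hcL
    have hbL : b < -1 := by linarith [hinvc.1, hinvc.2]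
    exact ⟨hbL, hcL⟩
end

section
/- Let m, n, t be integers and set M = 1 - m, N = 1 - n, T = 1 - t. If a, b, c are nonzero real numbers satisfying 1 + a + 1/b = m, 1 + b + 1/c = n, 1 + c + 1/a = t, then (N·T - 1)·a² + (M·N·T - M + N - T)·a + (M·N - 1) = 0. -/
/-- Eliminating b and c from the Q(m,n,t) system yields the quadratic
equation (NT - 1)a² + (MNT - M + N - T)a + (MN - 1) = 0, where M = 1-m, N = 1-n,
T = 1-t. -/
theorem Q_system_quadratic_elimination
    (m n t : ℤ) (M N T : ℤ) (hM : M = 1 - m) (hN : N = 1 - n) (hT : T = 1 - t)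
    (a b c : ℝ) (ha : a ≠ 0) (hb : b ≠ 0) (hc : c ≠ 0)
    (h1 : 1 + a + 1 / b = (m : ℝ)) (h2 : 1 + b + 1 / c = (n : ℝ))
    (h3 : 1 + c + 1 / a = (t : ℝ)) :
    ((N : ℝ) * T - 1) * a ^ 2 + ((M : ℝ) * N * T - M + N - T) * a
      + ((M : ℝ) * N - 1) = 0 := by
  have E1 : a*b + 1 + (M:ℝ)*b = 0 := by
    rw [hM]; push_cast; field_simp at h1 ⊢; linarith
  have E2 : b*c + 1 + (N:ℝ)*c = 0 := by
    rw [hN]; push_cast; field_simp at h2 ⊢; linarith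
  have E3 : c*a + 1 + (T:ℝ)*a = 0 := by
    rw [hT]; push_cast; field_simp at h3 ⊢; linarith
  linear_combination (a*c)*E1 - a*((M:ℝ)+a)*E2 + (a*(N:ℝ) - 1 + (M:ℝ)*(N:ℝ))*E3
end

section
/- For all integers M, N, T with M ≥ 2, N ≥ 2, T ≥ 2, and not all of M, N, T equal to 2, the real number √((M·N·T - M - N - T)² - 4) is irrational. -/
/-- For integers M, N, T ≥ 2, not all equal to 2, the square root of the
discriminant (MNT - M - N - T)² - 4 is irrational. -/
theorem sqrt_discriminant_irrational
    (M N T : ℤ) (hM : 2 ≤ M) (hN : 2 ≤ N) (hT : 2 ≤ T)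
    (hnot : ¬(M = 2 ∧ N = 2 ∧ T = 2)) :
    Irrational (Real.sqrt (((M : ℝ) * N * T - M - N - T) ^ 2 - 4)) := by
  have hNT : 1 ≤ N * T - 1 := by nlinarith
  have hMN : 1 ≤ M * N - 1 := by nlinarith
  have hMT : 1 ≤ M * T - 1 := by nlinarith
  have hk3 : 3 ≤ M * N * T - M - N - T := by
    rcases (by omega : 3 ≤ M ∨ 3 ≤ N ∨ 3 ≤ T) with h | h | h
    · nlinarith [mul_nonneg (by linarith : (0:ℤ) ≤ M - 3) (by linarith : (0:ℤ) ≤ N * T - 1)]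
    · nlinarith [mul_nonneg (by linarith : (0:ℤ) ≤ N - 3) (by linarith : (0:ℤ) ≤ M * T - 1)]
    · nlinarith [mul_nonneg (by linarith : (0:ℤ) ≤ T - 3) (by linarith : (0:ℤ) ≤ M * N - 1)]
  set k : ℤ := M * N * T - M - N - T with hk
  have hcast : (((M : ℝ) * N * T - M - N - T) ^ 2 - 4) = ((k ^ 2 - 4 : ℤ) : ℝ) := by
    push_cast [hk]; ring
  rw [hcast, irrational_sqrt_intCast_iff]
  constructor
  · rintro ⟨r, hr⟩
    have hr' : |r| * |r| = k ^ 2 - 4 := by rw [← abs_mul, abs_mul_self]; omega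
    have h0 : 0 ≤ |r| := abs_nonneg r
    have h1 : |r| < k := by
      by_contra h
      push_neg at h
      nlinarith
    have h2 : |r| ≤ k - 1 := by omega
    nlinarith
  · nlinarith
end

section
/- Let M, N, T be integers with M ≥ 2, N ≥ 2, T ≥ 2, not all equal to 2, and define f(x) = (N·T - 1)·x² + (M·N·T - M + N - T)·x + (M·N - 1) for real x. Then there exist real numbers a₁ and a₂ with f(a₁) = 0, f(a₂) = 0, and a₂ < -1 < a₁ < 0, and every real root of f equals a₁ or a₂. -/
/-- For integers M, N, T ≥ 2, not all 2, the quadratic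
f(x) = (NT - 1)x² + (MNT - M + N - T)x + (MN - 1) has two real roots a₁, a₂ with
a₂ < -1 < a₁ < 0, and every real root of f is one of them. -/
theorem quadratic_two_roots
    (M N T : ℤ) (hM : 2 ≤ M) (hN : 2 ≤ N) (hT : 2 ≤ T)
    (hnot : ¬(M = 2 ∧ N = 2 ∧ T = 2))
    (f : ℝ → ℝ)
    (hf : ∀ x : ℝ, f x = ((N : ℝ) * T - 1) * x ^ 2
        + ((M : ℝ) * N * T - M + N - T) * x + ((M : ℝ) * N - 1)) :
    ∃ a₁ a₂ : ℝ, f a₁ = 0 ∧ f a₂ = 0 ∧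
      a₂ < -1 ∧ -1 < a₁ ∧ a₁ < 0 ∧
      ∀ x : ℝ, f x = 0 → x = a₁ ∨ x = a₂ := by
  have hM' : (2:ℝ) ≤ (M:ℝ) := by exact_mod_cast hM
  have hN' : (2:ℝ) ≤ (N:ℝ) := by exact_mod_cast hN
  have hT' : (2:ℝ) ≤ (T:ℝ) := by exact_mod_cast hT
  set A : ℝ := (N : ℝ) * T - 1 with hAdef
  set B : ℝ := (M : ℝ) * N * T - M + N - T with hBdef
  set C : ℝ := (M : ℝ) * N - 1 with hCdef
  have hA0 : 0 < A := by rw [hAdef]; nlinarith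
  have hC0 : 0 < C := by rw [hCdef]; nlinarith
  -- f(-1) < 0, i.e. A + C < B
  have hAC : A + C < B := by
    have h3 : (3:ℝ) ≤ (M:ℝ) ∨ (3:ℝ) ≤ (N:ℝ) ∨ (3:ℝ) ≤ (T:ℝ) := by
      have : M ≠ 2 ∨ N ≠ 2 ∨ T ≠ 2 := by tauto
      rcases this with h | h | h
      · left; exact_mod_cast lt_of_le_of_ne hM (Ne.symm h)
      · right; left; exact_mod_cast lt_of_le_of_ne hN (Ne.symm h)
      · right; right; exact_mod_cast lt_of_le_of_ne hT (Ne.symm h)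
    rw [hAdef, hBdef, hCdef]
    rcases h3 with h | h | h
    · nlinarith [mul_nonneg (sub_nonneg.mpr hN') (sub_nonneg.mpr hT'),
        mul_nonneg (mul_nonneg (by linarith : (0:ℝ) ≤ (M:ℝ) - 3) (by linarith : (0:ℝ) ≤ (N:ℝ) - 2)) (by linarith : (0:ℝ) ≤ (T:ℝ) - 2),
        mul_nonneg (by linarith : (0:ℝ) ≤ (M:ℝ) - 3) (by linarith : (0:ℝ) ≤ (N:ℝ) - 2),
        mul_nonneg (by linarith : (0:ℝ) ≤ (M:ℝ) - 3) (by linarith : (0:ℝ) ≤ (T:ℝ) - 2),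
        mul_nonneg (by linarith : (0:ℝ) ≤ (N:ℝ) - 2) (by linarith : (0:ℝ) ≤ (T:ℝ) - 2)]
    · nlinarith [mul_nonneg (mul_nonneg (by linarith : (0:ℝ) ≤ (M:ℝ) - 2) (by linarith : (0:ℝ) ≤ (N:ℝ) - 3)) (by linarith : (0:ℝ) ≤ (T:ℝ) - 2),
        mul_nonneg (by linarith : (0:ℝ) ≤ (M:ℝ) - 2) (by linarith : (0:ℝ) ≤ (N:ℝ) - 3),
        mul_nonneg (by linarith : (0:ℝ) ≤ (M:ℝ) - 2) (by linarith : (0:ℝ) ≤ (T:ℝ) - 2),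
        mul_nonneg (by linarith : (0:ℝ) ≤ (N:ℝ) - 3) (by linarith : (0:ℝ) ≤ (T:ℝ) - 2)]
    · nlinarith [mul_nonneg (mul_nonneg (by linarith : (0:ℝ) ≤ (M:ℝ) - 2) (by linarith : (0:ℝ) ≤ (N:ℝ) - 2)) (by linarith : (0:ℝ) ≤ (T:ℝ) - 3),
        mul_nonneg (by linarith : (0:ℝ) ≤ (M:ℝ) - 2) (by linarith : (0:ℝ) ≤ (N:ℝ) - 2),
        mul_nonneg (by linarith : (0:ℝ) ≤ (M:ℝ) - 2) (by linarith : (0:ℝ) ≤ (T:ℝ) - 3),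
        mul_nonneg (by linarith : (0:ℝ) ≤ (N:ℝ) - 2) (by linarith : (0:ℝ) ≤ (T:ℝ) - 3)]
  have hB0 : 0 < B := by linarith
  have hD : 0 < B ^ 2 - 4 * A * C := by nlinarith [sq_nonneg (A - C)]
  set s : ℝ := Real.sqrt (B ^ 2 - 4 * A * C) with hsdef
  have hs2 : s ^ 2 = B ^ 2 - 4 * A * C := Real.sq_sqrt hD.le
  have hs0 : 0 < s := Real.sqrt_pos.mpr hD
  -- key inequalities on s
  have hsB : s < B := by nlinarith
  have hs1 : B - 2 * A < s := by
    -- s² = B² - 4AC > B² - 4A(B-A) = (B-2A)²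
    have h : (B - 2 * A) ^ 2 < s ^ 2 := by nlinarith
    nlinarith [abs_lt_of_sq_lt_sq' h hs0.le]
  have hs2' : 2 * A - B < s := by
    have h : (B - 2 * A) ^ 2 < s ^ 2 := by nlinarith
    nlinarith [abs_lt_of_sq_lt_sq' h hs0.le]
  have hquad : ∀ x : ℝ, f x = 0 ↔ x = (-B + s) / (2 * A) ∨ x = (-B - s) / (2 * A) := by
    intro x
    rw [hf x]
    have hdisc : discrim A B C = s * s := by
      rw [discrim]; rw [← hs2]; ring
    rw [pow_two x]
    exact quadratic_eq_zero_iff (ne_of_gt hA0) hdisc x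
  refine ⟨(-B + s) / (2 * A), (-B - s) / (2 * A), ?_, ?_, ?_, ?_, ?_, ?_⟩
  · exact (hquad _).mpr (Or.inl rfl)
  · exact (hquad _).mpr (Or.inr rfl)
  · rw [div_lt_iff₀ (by linarith : (0:ℝ) < 2 * A)]; linarith
  · rw [lt_div_iff₀ (by linarith : (0:ℝ) < 2 * A)]; linarith
  · rw [div_lt_iff₀ (by linarith : (0:ℝ) < 2 * A)]; linarith
  · intro x hx; exact (hquad x).mp hx
end

section
/- Let m, n, t be integers with m ≤ -1, n ≤ -1, t ≤ -1, not all equal to -1, and let a, b, c be nonzero real numbers satisfying 1 + a + 1/b = m, 1 + b + 1/c = n, 1 + c + 1/a = t. Then the determinant of the 3×3 real matrix with rows (0, 1, a), (b, 0, 1), (1, c, 0) equals 1 + a·b·c, and 1 + a·b·c ≠ 0. -/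
/-- For integers m, n, t ≤ -1, not all -1, and a nonzero real solution
(a, b, c) of the Q(m,n,t) system, the determinant of the Cartan matrix of
Q±(m,n,t) equals 1 + abc, which is nonzero. -/
theorem Q_Cartan_matrix_det
    (m n t : ℤ) (hm : m ≤ -1) (hn : n ≤ -1) (ht : t ≤ -1)
    (hnot : ¬(m = -1 ∧ n = -1 ∧ t = -1))
    (a b c : ℝ) (ha : a ≠ 0) (hb : b ≠ 0) (hc : c ≠ 0)
    (h1 : 1 + a + 1 / b = (m : ℝ)) (h2 : 1 + b + 1 / c = (n : ℝ))
    (h3 : 1 + c + 1 / a = (t : ℝ)) :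
    (!![0, 1, a; b, 0, 1; 1, c, 0] : Matrix (Fin 3) (Fin 3) ℝ).det = 1 + a * b * c ∧
    1 + a * b * c ≠ 0 := by
  constructor
  · simp [Matrix.det_fin_three]
  · intro habc
    have e1 : b + a * b + 1 = (m : ℝ) * b := by
      field_simp at h1; linarith [h1]
    have e2 : c + b * c + 1 = (n : ℝ) * c := by
      field_simp at h2; linarith [h2]
    have e3 : a + c * a + 1 = (t : ℝ) * a := by
      field_simp at h3; linarith [h3]
    have habc' : a * b * c = -1 := by linarith
    have key : ((m : ℝ) - 1) * ((n : ℝ) - 1) * ((t : ℝ) - 1) = (m : ℝ) + (n : ℝ) + (t : ℝ) - 5 := by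
      rw [← h1, ← h2, ← h3]
      have h0 : a * b * c + 1 = 0 := by linarith
      field_simp
      linear_combination (a * b * c + 1) * h0
    have keyZ : (m - 1) * (n - 1) * (t - 1) = m + n + t - 5 := by
      exact_mod_cast (by push_cast; linarith [key] : ((m - 1) * (n - 1) * (t - 1) : ℝ) = ((m + n + t - 5 : ℤ) : ℝ))
    -- integer contradiction
    have hm2 : m - 1 ≤ -2 := by omega
    have hn2 : n - 1 ≤ -2 := by omega
    have ht2 : t - 1 ≤ -2 := by omega
    obtain ⟨u, rfl⟩ : ∃ u : ℤ, m = -1 - u := ⟨-1 - m, by ring⟩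
    obtain ⟨v, rfl⟩ : ∃ v : ℤ, n = -1 - v := ⟨-1 - n, by ring⟩
    obtain ⟨w, rfl⟩ : ∃ w : ℤ, t = -1 - w := ⟨-1 - t, by ring⟩
    have hu0 : 0 ≤ u := by omega
    have hv0 : 0 ≤ v := by omega
    have hw0 : 0 ≤ w := by omega
    have hS : 1 ≤ u + v + w := by omega
    have keyU : (u + 2) * (v + 2) * (w + 2) = u + v + w + 8 := by linear_combination -keyZ
    nlinarith [keyU, mul_nonneg hu0 hv0, mul_nonneg hv0 hw0, mul_nonneg hu0 hw0,
      mul_nonneg (mul_nonneg hu0 hv0) hw0]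
end

section
/- Let m, n, t be integers with m ≤ -1, n ≤ -1, t ≤ -1, not all equal to -1, and let a, b, c be nonzero real numbers satisfying 1 + a + 1/b = m, 1 + b + 1/c = n, 1 + c + 1/a = t. Then there do not exist nonzero real numbers d₁, d₂, d₃ such that the matrix D·A is symmetric, where D is the diagonal matrix with diagonal entries d₁, d₂, d₃ and A is the 3×3 matrix with rows (0, 1, a), (b, 0, 1), (1, c, 0). That is, the Cartan matrix of Q±(m,n,t) is not symmetrizable. -/
/-- For integers m, n, t ≤ -1, not all -1, and a nonzero real solution
(a, b, c) of the Q(m,n,t) system, the Cartan matrix of Q±(m,n,t) is not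
symmetrizable: there is no invertible diagonal D with D·A symmetric. -/
theorem Q_Cartan_matrix_not_symmetrizable
    (m n t : ℤ) (hm : m ≤ -1) (hn : n ≤ -1) (ht : t ≤ -1)
    (hnot : ¬(m = -1 ∧ n = -1 ∧ t = -1))
    (a b c : ℝ) (ha : a ≠ 0) (hb : b ≠ 0) (hc : c ≠ 0)
    (h1 : 1 + a + 1 / b = (m : ℝ)) (h2 : 1 + b + 1 / c = (n : ℝ))
    (h3 : 1 + c + 1 / a = (t : ℝ)) :
    ¬∃ d₁ d₂ d₃ : ℝ, d₁ ≠ 0 ∧ d₂ ≠ 0 ∧ d₃ ≠ 0 ∧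
      (Matrix.diagonal ![d₁, d₂, d₃] *
        (!![0, 1, a; b, 0, 1; 1, c, 0] : Matrix (Fin 3) (Fin 3) ℝ)).IsSymm := by
  rintro ⟨d₁, d₂, d₃, hd₁, hd₂, hd₃, hsym⟩
  rw [Matrix.IsSymm] at hsym
  have e1 : d₁ * 1 = d₂ * b := by
    have := congrFun (congrFun hsym 0) 1
    simpa [Matrix.diagonal_mul, Matrix.transpose_apply] using this.symm
  have e2 : d₁ * a = d₃ * 1 := by
    have := congrFun (congrFun hsym 0) 2
    simpa [Matrix.diagonal_mul, Matrix.transpose_apply] using this.symm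
  have e3 : d₂ * 1 = d₃ * c := by
    have := congrFun (congrFun hsym 1) 2
    simpa [Matrix.diagonal_mul, Matrix.transpose_apply] using this.symm
  -- symmetrizability forces abc = 1
  have habc : a * b * c = 1 := by
    have hkey : d₂ * (a * b * c) = d₂ * 1 := by linear_combination (-(a*c)) * e1 + c * e2 + (-1) * e3
    exact mul_left_cancel₀ hd₂ hkey
  -- rewrite reciprocals using abc = 1
  have hb1 : (1 : ℝ) / b = a * c := by
    field_simp
    nlinarith [habc]
  have hc1 : (1 : ℝ) / c = a * b := by
    field_simp
    nlinarith [habc]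
  have ha1 : (1 : ℝ) / a = b * c := by
    field_simp
    nlinarith [habc]
  rw [hb1] at h1
  rw [hc1] at h2
  rw [ha1] at h3
  have key : ((m : ℝ) - 1) * ((n : ℝ) - 1) * ((t : ℝ) - 1) = (m : ℝ) + (n : ℝ) + (t : ℝ) - 1 := by
    rw [← h1, ← h2, ← h3]
    linear_combination ((1 + a + b + c + a*b + b*c + a*c) + a*b*c + 1) * habc
  have keyZ : (m - 1) * (n - 1) * (t - 1) = m + n + t - 1 := by exact_mod_cast key
  have hu : (0 : ℤ) ≤ -1 - m := by linarith
  have hv : (0 : ℤ) ≤ -1 - n := by linarith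
  have hw : (0 : ℤ) ≤ -1 - t := by linarith
  nlinarith [keyZ, mul_nonneg hu hv, mul_nonneg hv hw, mul_nonneg hu hw,
    mul_nonneg (mul_nonneg hu hv) hw]
end

section
/- Let m, n, t be integers with m ≤ -1, n ≤ -1, t ≤ -1, and let a, b, c be nonzero real numbers satisfying 1 + a + 1/b = m, 1 + b + 1/c = n, 1 + c + 1/a = t. If a·b·c = 1, then a·n = m·n - m - n; in particular a is rational. -/
/-- For integers m, n, t ≤ -1 and a nonzero real solution (a, b, c) of
the Q(m,n,t) system with abc = 1 (the symmetrizability condition), one has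
a·n = mn - m - n; in particular a is rational. -/
theorem Q_system_symmetrizable_forces_rational
    (m n t : ℤ) (hm : m ≤ -1) (hn : n ≤ -1) (ht : t ≤ -1)
    (a b c : ℝ) (ha : a ≠ 0) (hb : b ≠ 0) (hc : c ≠ 0)
    (h1 : 1 + a + 1 / b = (m : ℝ)) (h2 : 1 + b + 1 / c = (n : ℝ))
    (h3 : 1 + c + 1 / a = (t : ℝ))
    (habc : a * b * c = 1) :
    a * (n : ℝ) = (m : ℝ) * (n : ℝ) - (m : ℝ) - (n : ℝ) ∧ ∃ q : ℚ, a = (q : ℝ) := by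
  have hib : (1:ℝ)/b = a*c := by
    rw [div_eq_iff hb]; linear_combination -habc
  have hic : (1:ℝ)/c = a*b := by
    rw [div_eq_iff hc]; linear_combination -habc
  rw [hib] at h1
  rw [hic] at h2
  -- b*(m-1-a) = 1
  have hbm : b*((m:ℝ)-1-a) = 1 := by linear_combination habc - b*h1
  have key : a * (n : ℝ) = (m : ℝ) * (n : ℝ) - (m : ℝ) - (n : ℝ) := by
    linear_combination ((m:ℝ)-1-a) * h2 - (1+a) * hbm
  refine ⟨key, ⟨((m:ℚ)*n - m - n)/n, ?_⟩⟩
  have hn0 : (n:ℝ) ≠ 0 := by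
    exact_mod_cast (by omega : (n:ℤ) ≠ 0)
  push_cast
  field_simp
  linarith [key]
end

section
/- Let A be an n×n complex matrix and k an index such that A k k = 0 and, for every index i, A i k = 0 if and only if A k i = 0. Define the odd reflection r_k(A) = A' by: A' k j = A k j for all j; A' i k = -(A k i)·(A i k) for i ≠ k; and for i ≠ k, j ≠ k: A' i j = A i j if A i k = 0; A' i j = (A k i)·(A i j) if A i k ≠ 0 and A k j = 0; A' i j = (A k i)·(A i j) + (A i k)·(A k j) + (A k i)·(A i k) if A i k ≠ 0 and A k j ≠ 0. Then A' k k = 0 and A' again satisfies the condition that A' i k = 0 if and only if A' k i = 0, so r_k may be applied again; and r_k(r_k(A)) = D·A, where D is the invertible diagonal matrix with D i i = (A k i)² whenever i ≠ k and A k i ≠ 0, and D i i = 1 otherwise. -/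
open Classical in
/-- The odd reflection of an n×n complex matrix `A` at an index `k` with
`A k k = 0` and `A i k = 0 ↔ A k i = 0` for all `i`. -/
noncomputable def oddReflection {n : ℕ} (A : Matrix (Fin n) (Fin n) ℂ) (k : Fin n) :
    Matrix (Fin n) (Fin n) ℂ :=
  Matrix.of fun i j =>
    if i = k then A k j
    else if j = k then -(A k i) * A i k
    else if A i k = 0 then A i j
    else if A k j = 0 then A k i * A i j
    else A k i * A i j + A i k * A k j + A k i * A i k

open Classical in
/-- The odd reflection at a regular isotropic index `k` preserves the
conditions `A k k = 0` and regularity at `k`, and applying it twice returns the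
original matrix up to left multiplication by the invertible diagonal matrix `D` with
`D i i = (A k i)²` when `i ≠ k` and `A k i ≠ 0`, and `D i i = 1` otherwise. -/
theorem oddReflection_twice
    {n : ℕ} (A : Matrix (Fin n) (Fin n) ℂ) (k : Fin n)
    (hkk : A k k = 0) (hreg : ∀ i, A i k = 0 ↔ A k i = 0) :
    oddReflection A k k k = 0 ∧
    (∀ i, oddReflection A k i k = 0 ↔ oddReflection A k k i = 0) ∧
    IsUnit (Matrix.diagonal
      (fun i => if i ≠ k ∧ A k i ≠ 0 then (A k i) ^ 2 else 1) :
        Matrix (Fin n) (Fin n) ℂ) ∧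
    oddReflection (oddReflection A k) k =
      (Matrix.diagonal
        (fun i => if i ≠ k ∧ A k i ≠ 0 then (A k i) ^ 2 else 1) :
          Matrix (Fin n) (Fin n) ℂ) * A := by
  set B := oddReflection A k with hBdef
  have hBk : ∀ j, B k j = A k j := fun j => by simp [hBdef, oddReflection]
  have hBik : ∀ i, i ≠ k → B i k = -(A k i) * A i k := fun i hi => by
    simp [hBdef, oddReflection, hi]
  refine ⟨by simp [hBk, hkk], ?_, ?_, ?_⟩
  · intro i
    by_cases hi : i = k
    · subst hi; simp [hBk, hkk]
    · rw [hBik i hi, hBk]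
      constructor
      · intro h
        rcases mul_eq_zero.mp h with h | h
        · exact neg_eq_zero.mp h
        · exact (hreg i).mp h
      · intro h; rw [h]; ring
  · rw [Matrix.isUnit_iff_isUnit_det, Matrix.det_diagonal, isUnit_iff_ne_zero]
    apply Finset.prod_ne_zero_iff.mpr
    intro i _
    split_ifs with h
    · exact pow_ne_zero 2 h.2
    · exact one_ne_zero
  · ext i j
    rw [Matrix.diagonal_mul]
    by_cases hi : i = k
    · subst hi
      simp [oddReflection, hBk]
    · by_cases hj : j = k
      · subst hj
        rw [show oddReflection B j i j = -(B j i) * B i j from by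
          simp [oddReflection, hi], hBk, hBik i hi]
        by_cases hki : A j i = 0
        · simp [hi, hki, (hreg i).mpr hki]
        · have hc : i ≠ j ∧ A j i ≠ 0 := ⟨hi, hki⟩
          rw [if_pos hc]
          ring
      · have hBkj : B k j = A k j := hBk j
        have hBij : oddReflection B k i j =
            if B i k = 0 then B i j
            else if B k j = 0 then B k i * B i j
            else B k i * B i j + B i k * B k j + B k i * B i k := by
          simp [oddReflection, hi, hj]
        rw [hBij, hBik i hi, hBk, hBk]
        by_cases hki : A k i = 0
        · have hik : A i k = 0 := (hreg i).mpr hki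
          simp only [hki, neg_zero, zero_mul, if_pos rfl, hi]
          simp [hBdef, oddReflection, hi, hj, hik, hki]
        · have hik : A i k ≠ 0 := fun h => hki ((hreg i).mp h)
          have hne : -(A k i) * A i k ≠ 0 := by
            simp [hki, hik]
          have hc : i ≠ k ∧ A k i ≠ 0 := ⟨hi, hki⟩
          rw [if_neg hne, if_pos hc]
          have hBijv : B i j =
              if A k j = 0 then A k i * A i j
              else A k i * A i j + A i k * A k j + A k i * A i k := by
            simp [hBdef, oddReflection, hi, hj, hik]
          by_cases hkj : A k j = 0
          · simp only [hBijv, if_pos hkj, if_pos hc]; ring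
          · simp only [hBijv, if_neg hkj, if_pos hc]; ring
end
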